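/- For every ε ∈ (0,1) and every y in the closed interval [y₁(ε), y₂(ε)], one has b(ε) − y² > 0. -/
import Mathlib


/-- The parameter `b(ε) = 1/2 − ((1 − 3ε²)/4)·√(4 − 3ε²)` of the Sasaki–Einstein
metric `Y^{p,q}`, with `ε = q/p`. -/
noncomputable def ypqB (ε : ℝ) : ℝ :=
  1/2 - ((1 - 3*ε^2)/4) * Real.sqrt (4 - 3*ε^2)

/-- The endpoint `y₁(ε) = (2 − 3ε − √(4 − 3ε²))/4`. -/
noncomputable def ypqY1 (ε : ℝ) : ℝ := (2 - 3*ε - Real.sqrt (4 - 3*ε^2))/4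

/-- The endpoint `y₂(ε) = (2 + 3ε − √(4 − 3ε²))/4`. -/
noncomputable def ypqY2 (ε : ℝ) : ℝ := (2 + 3*ε - Real.sqrt (4 - 3*ε^2))/4

/-- For every `ε ∈ (0,1)` and every `y ∈ [y₁(ε), y₂(ε)]`, one has `b(ε) − y² > 0`. -/
theorem ypq_b_sub_sq_pos :
    ∀ ε ∈ Set.Ioo (0 : ℝ) 1, ∀ y ∈ Set.Icc (ypqY1 ε) (ypqY2 ε),
      0 < ypqB ε - y^2 := by
  rintro ε ⟨hε0, hε1⟩ y ⟨hy1, hy2⟩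
  set s := Real.sqrt (4 - 3*ε^2) with hs
  have h4 : (0:ℝ) < 4 - 3*ε^2 := by nlinarith
  have hs2 : s^2 = 4 - 3*ε^2 := Real.sq_sqrt h4.le
  have hs0 : 0 < s := Real.sqrt_pos.mpr h4
  have hslt2 : s < 2 := by nlinarith [hs2, hs0]
  -- positivity at the endpoints
  have hb1 : 0 < ypqB ε - (ypqY1 ε)^2 := by
    unfold ypqB ypqY1
    rw [← hs]
    have key : 0 < (2*ε - 1) * s + (2 - ε) := by
      rcases le_or_gt (1/2 : ℝ) ε with h | h
      · nlinarith
      · nlinarith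
    nlinarith [hs2, hs0, mul_pos hε0 key]
  have hb2 : 0 < ypqB ε - (ypqY2 ε)^2 := by
    unfold ypqB ypqY2
    rw [← hs]
    have key : 0 < (2*ε + 1) * s - (2 + ε) := by
      have hsq : (2 + ε)^2 < ((2*ε + 1) * s)^2 := by
        have : ((2*ε+1)*s)^2 = (2*ε+1)^2 * (4 - 3*ε^2) := by
          rw [mul_pow, hs2]
        rw [this]
        nlinarith [mul_pos hε0 (mul_pos (sub_pos.mpr hε1) (by nlinarith : (0:ℝ) < (1+ε)^2))]
      nlinarith [hsq, hs0]
    nlinarith [hs2, hs0, mul_pos hε0 key]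
  -- concavity argument on the interval
  have hprod : 0 ≤ (y - ypqY1 ε) * (ypqY2 ε - y) :=
    mul_nonneg (sub_nonneg.mpr hy1) (sub_nonneg.mpr hy2)
  rcases le_or_gt y 0 with h | h
  · -- here y² ≤ y₁², since y₁ ≤ y ≤ 0
    nlinarith [hb1, mul_nonneg (sub_nonneg.mpr hy1) (by linarith : (0:ℝ) ≤ -(y + ypqY1 ε))]
  · -- here y² ≤ y₂², since 0 < y ≤ y₂
    nlinarith [hb2, mul_nonneg (sub_nonneg.mpr hy2) (by linarith : (0:ℝ) ≤ ypqY2 ε + y)]
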